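/- Let G₁ be the group presented by generators a, b, c and relators a², b², c², (abc)². Then the homomorphism σ₁ from G₁ to the group of affine equivalences of ℝ² determined by σ₁(a)(x,y) = (2 − x, 1 − y), σ₁(b)(x,y) = (3 − x, 3 − y), σ₁(c)(x,y) = (1 − x, 2 − y) is well defined (the images satisfy the relators) and injective. -/

import Mathlib

namespace Stmt2Aux

/-! ### The concrete group `H = ℤ² ⋊ C₂` -/

structure H where
  m : ℤ
  n : ℤ
  s : Bool

instance : Mul H :=
  ⟨fun x y => ⟨x.m + (if x.s then -y.m else y.m), x.n + (if x.s then -y.n else y.n), xor x.s y.s⟩⟩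
instance : One H := ⟨⟨0, 0, false⟩⟩
instance : Inv H := ⟨fun x => ⟨if x.s then x.m else -x.m, if x.s then x.n else -x.n, x.s⟩⟩

theorem H.mul_def (a b : H) : a * b =
    ⟨a.m + (if a.s then -b.m else b.m), a.n + (if a.s then -b.n else b.n), xor a.s b.s⟩ := rfl
theorem H.one_def : (1 : H) = ⟨0, 0, false⟩ := rfl
theorem H.inv_def (a : H) :
    a⁻¹ = ⟨if a.s then a.m else -a.m, if a.s then a.n else -a.n, a.s⟩ := rfl

instance : Group H where
  mul_assoc a b c := by
    obtain ⟨am, an, as⟩ := a; obtain ⟨bm, bn, bs⟩ := b; obtain ⟨cm, cn, cs⟩ := c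
    cases as <;> cases bs <;> cases cs <;> simp [H.mul_def] <;> omega
  one_mul a := by obtain ⟨am, an, as⟩ := a; cases as <;> simp [H.mul_def, H.one_def]
  mul_one a := by obtain ⟨am, an, as⟩ := a; cases as <;> simp [H.mul_def, H.one_def]
  inv_mul_cancel a := by
    obtain ⟨am, an, as⟩ := a
    cases as <;> simp [H.mul_def, H.one_def, H.inv_def]

theorem H.sq_one (v : H) (hv : v.s = true) : v * v = 1 := by
  obtain ⟨m, n, s⟩ := v
  simp at hv
  subst hv
  simp [H.mul_def, H.one_def]

/-! ### Abstract word calculations -/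

section Words
variable {G : Type*} [Group G] (x y z : G)

theorem cancel_of_sq (hx : x * x = 1) : ∀ w, x * (x * w) = w := by
  intro w; rw [← mul_assoc, hx, one_mul]

variable (hx : x * x = 1) (hy : y * y = 1) (hz : z * z = 1)
  (hr : (x * y * z) * (x * y * z) = 1)

include hx in
theorem inv_of_sq : x⁻¹ = x := by
  rw [inv_eq_iff_mul_eq_one, hx]

include hx hy hz hr in
theorem rev_eq : x * (y * z) = z * (y * x) := by
  have h1 : (x * y * z)⁻¹ = x * y * z := by rw [inv_eq_iff_mul_eq_one, hr]
  have := h1.symm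
  rw [mul_inv_rev, mul_inv_rev, inv_of_sq x hx, inv_of_sq y hy, inv_of_sq z hz] at this
  simpa [mul_assoc] using this

include hx hy hz hr in
theorem comm_t : (y * x) * (z * x) = (z * x) * (y * x) := by
  have hrev := rev_eq x y z hx hy hz hr
  simp only [mul_assoc]
  have h2 : z * (x * (y * (z * (x * y)))) = 1 := by
    calc z * (x * (y * (z * (x * y))))
        = z * ((x * (y * z)) * (x * y)) := by simp [mul_assoc]
      _ = z * ((z * (y * x)) * (x * y)) := by rw [hrev]
      _ = 1 := by
          simp only [mul_assoc]
          rw [cancel_of_sq z hz, cancel_of_sq x hx, hy]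
  have h3 : (z * (x * y)) * (z * (x * y)) = 1 := by
    calc (z * (x * y)) * (z * (x * y)) = z * (x * (y * (z * (x * y)))) := by
          simp [mul_assoc]
      _ = 1 := h2
  have h4 : (z * (x * y))⁻¹ = z * (x * y) := by rw [inv_eq_iff_mul_eq_one, h3]
  have h5 : y * (x * z) = z * (x * y) := by
    have := h4.symm
    rw [mul_inv_rev, mul_inv_rev, inv_of_sq x hx, inv_of_sq y hy, inv_of_sq z hz] at this
    simpa [mul_assoc] using this.symm
  calc y * (x * (z * x)) = (y * (x * z)) * x := by simp [mul_assoc]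
    _ = (z * (x * y)) * x := by rw [h5]
    _ = z * (x * (y * x)) := by simp [mul_assoc]

include hx hy hz hr in
theorem conj1 : (x * y * z) * (y * x) = (y * x)⁻¹ * (x * y * z) := by
  rw [mul_inv_rev, inv_of_sq x hx, inv_of_sq y hy]
  simp only [mul_assoc]
  rw [rev_eq x y z hx hy hz hr]

include hx hy hz hr in
theorem conj2 : (x * y * z) * (z * x) = (z * x)⁻¹ * (x * y * z) := by
  rw [mul_inv_rev, inv_of_sq x hx, inv_of_sq z hz]
  simp only [mul_assoc]
  rw [rev_eq x y z hx hy hz hr, cancel_of_sq z hz, cancel_of_sq z hz]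

include hx hy hz hr in
theorem id0 : (y * x) * (z * x)⁻¹ * (x * y * z) = x := by
  have hW : x * (y * (z * (x * (y * z)))) = 1 := by simpa [mul_assoc] using hr
  have hW2 : x⁻¹ = y * (z * (x * (y * z))) := inv_eq_of_mul_eq_one_right hW
  rw [mul_inv_rev, inv_of_sq x hx, inv_of_sq z hz]
  simp only [mul_assoc]
  rw [cancel_of_sq x hx, ← hW2, inv_of_sq x hx]

include hx hy hz hr in
theorem id1 : ((y * x) * (y * x)) * (z * x)⁻¹ * (x * y * z) = y := by
  have hW : x * (y * (z * (x * (y * z)))) = 1 := by simpa [mul_assoc] using hr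
  rw [mul_inv_rev, inv_of_sq x hx, inv_of_sq z hz]
  simp only [mul_assoc]
  rw [cancel_of_sq x hx, hW, mul_one]

include hx hy in
theorem id2 : (y * x) * (x * y * z) = z := by
  simp only [mul_assoc]
  rw [cancel_of_sq x hx, cancel_of_sq y hy]

end Words

/-! ### `ψ`'s underlying function and its multiplicativity -/

section Psi
variable {G : Type*} [Group G] (T1 T2 g : G)

def Pfun : H → G := fun v => T1 ^ v.m * T2 ^ v.n * (cond v.s g 1)

variable (h12 : Commute T1 T2) (h1 : g * T1 = T1⁻¹ * g) (h2 : g * T2 = T2⁻¹ * g)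
  (hg : g * g = 1)

include h12 in
theorem Qlem : ∀ m n m' n' : ℤ,
    (T1 ^ m * T2 ^ n) * (T1 ^ m' * T2 ^ n') = T1 ^ (m + m') * T2 ^ (n + n') := by
  intro m n m' n'
  have hc : ∀ (a b : ℤ), T1 ^ a * T2 ^ b = T2 ^ b * T1 ^ a := fun a b =>
    (h12.zpow_zpow a b).eq
  calc (T1 ^ m * T2 ^ n) * (T1 ^ m' * T2 ^ n')
      = T1 ^ m * ((T2 ^ n * T1 ^ m') * T2 ^ n') := by simp [mul_assoc]
    _ = T1 ^ m * ((T1 ^ m' * T2 ^ n) * T2 ^ n') := by rw [← hc]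
    _ = T1 ^ (m + m') * T2 ^ (n + n') := by rw [zpow_add, zpow_add]; simp [mul_assoc]

include h1 in
theorem h1' : ∀ k : ℤ, g * T1 ^ k = T1 ^ (-k) * g := by
  intro k
  have h : SemiconjBy g T1 T1⁻¹ := h1
  simpa [zpow_neg, inv_zpow] using (h.zpow_right k).eq

include h2 in
theorem h2' : ∀ k : ℤ, g * T2 ^ k = T2 ^ (-k) * g := by
  intro k
  have h : SemiconjBy g T2 T2⁻¹ := h2
  simpa [zpow_neg, inv_zpow] using (h.zpow_right k).eq

include h12 h1 h2 hg in
theorem Pfun_mul (a b : H) : Pfun T1 T2 g (a * b) = Pfun T1 T2 g a * Pfun T1 T2 g b := by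
  obtain ⟨am, an, as⟩ := a; obtain ⟨bm, bn, bs⟩ := b
  have gQ : ∀ m n : ℤ, g * (T1 ^ m * T2 ^ n) = T1 ^ (-m) * T2 ^ (-n) * g := by
    intro m n
    rw [← mul_assoc, h1' T1 g h1 m, mul_assoc, h2' T2 g h2 n, ← mul_assoc]
  have key : ∀ (c : G) (m n : ℤ), (T1 ^ am * T2 ^ an * g) * (T1 ^ m * T2 ^ n * c)
      = T1 ^ (am + -m) * T2 ^ (an + -n) * (g * c) := by
    intro c m n
    calc (T1 ^ am * T2 ^ an * g) * (T1 ^ m * T2 ^ n * c)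
        = T1 ^ am * T2 ^ an * (g * (T1 ^ m * T2 ^ n)) * c := by simp [mul_assoc]
      _ = T1 ^ am * T2 ^ an * (T1 ^ (-m) * T2 ^ (-n) * g) * c := by rw [gQ]
      _ = ((T1 ^ am * T2 ^ an) * (T1 ^ (-m) * T2 ^ (-n))) * (g * c) := by simp [mul_assoc]
      _ = T1 ^ (am + -m) * T2 ^ (an + -n) * (g * c) := by rw [Qlem T1 T2 h12]
  cases as <;> cases bs <;>
    simp only [H.mul_def, Pfun, Bool.xor_false, Bool.xor_true, Bool.false_xor, Bool.true_xor,
      if_true, if_false, Bool.not_false, Bool.not_true, cond_true, cond_false, mul_one,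
      ite_true, ite_false, Bool.false_eq_true, Bool.true_eq_false]
  · rw [show T1 ^ (am + bm) * T2 ^ (an + bn) = (T1 ^ am * T2 ^ an) * (T1 ^ bm * T2 ^ bn)
      from Qlem T1 T2 h12 am an bm bn |>.symm]
  · rw [show T1 ^ (am + bm) * T2 ^ (an + bn) = (T1 ^ am * T2 ^ an) * (T1 ^ bm * T2 ^ bn)
      from Qlem T1 T2 h12 am an bm bn |>.symm, mul_assoc]
  · simpa using (key 1 bm bn).symm
  · simpa [hg] using (key g bm bn).symm

end Psi

/-! ### The embedding of `H` into the affine group of `ℝ²` -/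

noncomputable def Ffun (v : H) : (ℝ × ℝ) ≃ᵃ[ℝ] (ℝ × ℝ) :=
  (AffineEquiv.constVAdd ℝ (ℝ × ℝ)
      (((v.m : ℝ) - (v.n : ℝ), 2 * (v.m : ℝ) + (v.n : ℝ)) : ℝ × ℝ)) *
    (cond v.s (AffineEquiv.pointReflection ℝ (0 : ℝ × ℝ)) 1)

theorem Ffun_apply (v : H) (p : ℝ × ℝ) :
    Ffun v p = (((v.m : ℝ) - v.n) + (cond v.s (-1 : ℝ) 1) * p.1,
      ((2 * v.m + v.n : ℝ)) + (cond v.s (-1 : ℝ) 1) * p.2) := by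
  cases hs : v.s <;>
    simp [Ffun, hs, AffineEquiv.mul_def, AffineEquiv.trans_apply,
      AffineEquiv.pointReflection_apply, Equiv.pointReflection_apply, AffineEquiv.constVAdd_apply, Prod.ext_iff] <;>
    constructor <;> ring

theorem Ffun_mul (a b : H) : Ffun (a * b) = Ffun a * Ffun b := by
  apply DFunLike.ext
  intro p
  rw [AffineEquiv.coe_mul]
  simp only [Function.comp_apply, Ffun_apply, H.mul_def]
  cases ha : a.s <;> cases hb : b.s <;>
    simp [Prod.ext_iff] <;> constructor <;> push_cast <;> ring

theorem Ffun_eq_one (v : H) (h : Ffun v = 1) : v = 1 := by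
  obtain ⟨m, n, s⟩ := v
  have h0 := DFunLike.congr_fun h ((0 : ℝ), (0 : ℝ))
  have h1 := DFunLike.congr_fun h ((1 : ℝ), (0 : ℝ))
  rw [Ffun_apply] at h0 h1
  simp only [AffineEquiv.one_def, AffineEquiv.refl_apply] at h0 h1
  rw [Prod.ext_iff] at h0 h1
  obtain ⟨h01, h02⟩ := h0
  simp only [mul_zero, add_zero] at h01 h02
  have hm : (m : ℝ) = 0 := by linarith
  have hn : (n : ℝ) = 0 := by linarith
  have hm' : m = 0 := by exact_mod_cast hm
  have hn' : n = 0 := by exact_mod_cast hn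
  cases hs : s
  · subst hs; simp [H.one_def, hm', hn']
  · exfalso
    subst hs
    obtain ⟨h11, _⟩ := h1
    simp only [cond_true, mul_one] at h11
    rw [hm, hn] at h11
    norm_num at h11

/-! ### The presented group -/

abbrev rels1 : Set (FreeGroup (Fin 3)) :=
  {FreeGroup.of 0 ^ 2, FreeGroup.of 1 ^ 2, FreeGroup.of 2 ^ 2,
    (FreeGroup.of 0 * FreeGroup.of 1 * FreeGroup.of 2) ^ 2}

abbrev G1 := PresentedGroup rels1

def fH : Fin 3 → H := ![⟨1, -1, true⟩, ⟨2, -1, true⟩, ⟨1, 0, true⟩]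

theorem relsat : ∀ r ∈ rels1, FreeGroup.lift fH r = 1 := by
  intro r hr
  have habc : fH 0 * fH 1 * fH 2 = ⟨0, 0, true⟩ := by
    simp [fH, H.mul_def]
  rcases hr with rfl | rfl | rfl | rfl <;>
    simp only [map_pow, map_mul, FreeGroup.lift_apply_of, sq] <;>
    [skip; skip; skip; rw [habc]] <;>
    exact H.sq_one _ rfl

noncomputable def tau : G1 →* H := PresentedGroup.toGroup relsat

noncomputable def iota : H →* ((ℝ × ℝ) ≃ᵃ[ℝ] (ℝ × ℝ)) := MonoidHom.mk' Ffun Ffun_mul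

-- the generators of G1
def xg : G1 := PresentedGroup.of 0
def yg : G1 := PresentedGroup.of 1
def zg : G1 := PresentedGroup.of 2

theorem rel_one : ∀ r ∈ rels1, (PresentedGroup.mk rels1 r : G1) = 1 := fun _ hr =>
  (QuotientGroup.eq_one_iff _).2 (Subgroup.subset_normalClosure hr)

theorem hxg : xg * xg = 1 := by
  have := rel_one (FreeGroup.of 0 ^ 2) (by left; rfl)
  rw [map_pow, sq] at this
  exact this

theorem hyg : yg * yg = 1 := by
  have := rel_one (FreeGroup.of 1 ^ 2) (by right; left; rfl)
  rw [map_pow, sq] at this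
  exact this

theorem hzg : zg * zg = 1 := by
  have := rel_one (FreeGroup.of 2 ^ 2) (by right; right; left; rfl)
  rw [map_pow, sq] at this
  exact this

theorem hrg : (xg * yg * zg) * (xg * yg * zg) = 1 := by
  have := rel_one ((FreeGroup.of 0 * FreeGroup.of 1 * FreeGroup.of 2) ^ 2)
    (by right; right; right; rfl)
  rw [map_pow, sq, map_mul, map_mul] at this
  exact this

noncomputable def psi : H →* G1 :=
  MonoidHom.mk' (Pfun (yg * xg) (zg * xg) (xg * yg * zg))
    (Pfun_mul _ _ _ (comm_t xg yg zg hxg hyg hzg hrg)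
      (conj1 xg yg zg hxg hyg hzg hrg) (conj2 xg yg zg hxg hyg hzg hrg) hrg)

theorem psi_tau (q : G1) : psi (tau q) = q := by
  have : (psi.comp tau) = MonoidHom.id G1 := by
    apply PresentedGroup.ext
    intro i
    simp only [MonoidHom.comp_apply, MonoidHom.id_apply]
    fin_cases i
    · rw [show tau (PresentedGroup.of ⟨0, by norm_num⟩) = fH 0 from PresentedGroup.toGroup.of relsat]
      show (yg * xg) ^ (1 : ℤ) * (zg * xg) ^ (-1 : ℤ) * (xg * yg * zg) = xg
      rw [zpow_one, zpow_neg, zpow_one]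
      exact id0 xg yg zg hxg hyg hzg hrg
    · rw [show tau (PresentedGroup.of ⟨1, by norm_num⟩) = fH 1 from PresentedGroup.toGroup.of relsat]
      show (yg * xg) ^ (2 : ℤ) * (zg * xg) ^ (-1 : ℤ) * (xg * yg * zg) = yg
      rw [show ((2 : ℤ)) = 1 + 1 from rfl, zpow_add, zpow_one, zpow_neg, zpow_one]
      exact id1 xg yg zg hxg hyg hzg hrg
    · rw [show tau (PresentedGroup.of ⟨2, by norm_num⟩) = fH 2 from PresentedGroup.toGroup.of relsat]
      show (yg * xg) ^ (1 : ℤ) * (zg * xg) ^ (0 : ℤ) * (xg * yg * zg) = zg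
      rw [zpow_one, zpow_zero, mul_one]
      exact id2 xg yg zg hxg hyg
  exact DFunLike.congr_fun this q

noncomputable def sigma : G1 →* ((ℝ × ℝ) ≃ᵃ[ℝ] (ℝ × ℝ)) := iota.comp tau

theorem sigma_inj : Function.Injective sigma := by
  rw [injective_iff_map_eq_one]
  intro q hq
  have h1 : Ffun (tau q) = 1 := hq
  have h2 : tau q = 1 := Ffun_eq_one _ h1
  have := psi_tau q
  rw [h2, map_one] at this
  exact this.symm

theorem sigma_of (i : Fin 3) (p : ℝ × ℝ) : sigma (PresentedGroup.of i) p = Ffun (fH i) p := by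
  simp only [sigma, MonoidHom.comp_apply, tau, PresentedGroup.toGroup.of]
  rfl

end Stmt2Aux

/-- Let `G₁ = ⟨a, b, c | a² = b² = c² = (abc)² = 1⟩`. The homomorphism
`σ₁` from `G₁` to the group of affine equivalences of `ℝ²` determined by
`σ₁(a)(x,y) = (2 − x, 1 − y)`, `σ₁(b)(x,y) = (3 − x, 3 − y)`,
`σ₁(c)(x,y) = (1 − x, 2 − y)` is well defined (the images satisfy the relators)
and injective. -/
theorem stmt_2 :
    ∃ σ : PresentedGroup
        ({FreeGroup.of 0 ^ 2, FreeGroup.of 1 ^ 2, FreeGroup.of 2 ^ 2,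
          (FreeGroup.of 0 * FreeGroup.of 1 * FreeGroup.of 2) ^ 2} :
          Set (FreeGroup (Fin 3))) →* ((ℝ × ℝ) ≃ᵃ[ℝ] (ℝ × ℝ)),
      (∀ p : ℝ × ℝ, σ (PresentedGroup.of 0) p = (2 - p.1, 1 - p.2)) ∧
      (∀ p : ℝ × ℝ, σ (PresentedGroup.of 1) p = (3 - p.1, 3 - p.2)) ∧
      (∀ p : ℝ × ℝ, σ (PresentedGroup.of 2) p = (1 - p.1, 2 - p.2)) ∧
      Function.Injective σ := by
  refine ⟨Stmt2Aux.sigma, ?_, ?_, ?_, Stmt2Aux.sigma_inj⟩ <;>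
    intro p <;>
    rw [Stmt2Aux.sigma_of] <;>
    rw [Stmt2Aux.Ffun_apply] <;>
    norm_num [Stmt2Aux.fH, Prod.ext_iff, Matrix.cons_val_two] <;>
    constructor <;> trivial
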